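/- Let D be a joint distribution of (X,Y) with X valued in the unit ball of ℝ^d and Y valued in {−1,+1}, arising from an η-Massart halfspace with true unit-norm halfspace w* and margin γ > 0 (so |⟨w*,X⟩| ≥ γ almost surely). Then for every λ ≥ η, the LeakyRelu loss satisfies L_λ(w*) = E[LeakyRelu_λ(−Y⟨w*,X⟩)] ≤ −γ·(λ − err(w*)), where err(w*) = Pr[sgn(⟨w*,X⟩) ≠ Y]. -/

import Mathlib

open MeasureTheory
open scoped RealInnerProductSpace

/-- The LeakyRelu function with leakage parameter `l`. -/
noncomputable def leakyRelu (l z : ℝ) : ℝ := if 0 ≤ z then (1 - l) * z else l * z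

/-- **Lemma (Lemma 2.3 of DGT / Lemma `wstar-massart`).**
If `(X, Y)` follows an `η`-Massart halfspace model with unit-norm true halfspace `w*` and
margin `γ > 0`, then for any `λ ≥ η`, the LeakyRelu loss of `w*` satisfies
`L_λ(w*) ≤ -γ (λ - err(w*))`. The Massart condition is encoded by requiring that the
conditional expectation of the misclassification indicator given `X` is `ηf (X ·)` with
`0 ≤ ηf ≤ η`. -/
theorem massart_wstar_leakyRelu_bound
    {d : ℕ} {Ω : Type*} [MeasurableSpace Ω] (μ : Measure Ω) [IsProbabilityMeasure μ]
    (X : Ω → EuclideanSpace ℝ (Fin d)) (Y : Ω → ℝ)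
    (hX : Measurable X) (hY : Measurable Y)
    (hXball : ∀ᵐ ω ∂μ, ‖X ω‖ ≤ 1)
    (hYpm : ∀ᵐ ω ∂μ, Y ω = 1 ∨ Y ω = -1)
    (wstar : EuclideanSpace ℝ (Fin d)) (hwstar : ‖wstar‖ = 1)
    (γ : ℝ) (hγ : 0 < γ)
    (hmargin : ∀ᵐ ω ∂μ, γ ≤ |⟪wstar, X ω⟫|)
    (η : ℝ) (hη0 : 0 ≤ η) (hη : η < 1/2)
    (ηf : EuclideanSpace ℝ (Fin d) → ℝ) (hηf_meas : Measurable ηf)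
    (hηf_bounds : ∀ x, 0 ≤ ηf x ∧ ηf x ≤ η)
    (hMassart : MeasureTheory.condExp (MeasurableSpace.comap X inferInstance) μ
        (fun ω => if Real.sign ⟪wstar, X ω⟫ ≠ Y ω then (1:ℝ) else 0)
      =ᵐ[μ] fun ω => ηf (X ω))
    (lam : ℝ) (hlam : η ≤ lam) :
    ∫ ω, leakyRelu lam (-(Y ω) * ⟪wstar, X ω⟫) ∂μ ≤
      -γ * (lam - (μ {ω | Real.sign ⟪wstar, X ω⟫ ≠ Y ω}).toReal) := by
  have hm : MeasurableSpace.comap X inferInstance ≤ ‹MeasurableSpace Ω› := hX.comap_le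
  haveI : SigmaFinite (μ.trim hm) := inferInstance
  have hsign : Measurable Real.sign := by
    have : Real.sign = fun r : ℝ => if r < 0 then (-1:ℝ) else if 0 < r then 1 else 0 :=
      funext fun r => rfl
    rw [this]
    exact Measurable.ite (measurableSet_lt measurable_id measurable_const) measurable_const
      (Measurable.ite (measurableSet_lt measurable_const measurable_id) measurable_const
        measurable_const)
  set f : Ω → ℝ := fun ω => ⟪wstar, X ω⟫ with hf_def
  have hf_meas : Measurable f := measurable_const.inner hX
  set g : Ω → ℝ := fun ω => if Real.sign (f ω) ≠ Y ω then (1:ℝ) else 0 with hg_def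
  have hg_meas : Measurable g := by
    apply Measurable.ite _ measurable_const measurable_const
    exact (measurableSet_eq_fun (hsign.comp hf_meas) hY).compl
  have habs_meas : Measurable fun ω => |f ω| := hf_meas.abs
  have hf_bd : ∀ᵐ ω ∂μ, |f ω| ≤ 1 := by
    filter_upwards [hXball] with ω hω
    calc |f ω| ≤ ‖wstar‖ * ‖X ω‖ := abs_real_inner_le_norm _ _
    _ ≤ 1 := by rw [hwstar, one_mul]; exact hω
  have hg_bd : ∀ ω, |g ω| ≤ 1 := by
    intro ω; simp only [hg_def]; split <;> norm_num
  have hint_of_bd : ∀ (h : Ω → ℝ) (c : ℝ), Measurable h → (∀ᵐ ω ∂μ, |h ω| ≤ c) →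
      Integrable h μ := by
    intro h c hmeas hb
    exact (integrable_const c).mono' hmeas.aestronglyMeasurable (by simpa using hb)
  have hint_f : Integrable (fun ω => |f ω|) μ :=
    hint_of_bd _ 1 habs_meas (by filter_upwards [hf_bd] with ω h using by simpa using h)
  have hint_g : Integrable g μ := hint_of_bd _ 1 hg_meas (.of_forall hg_bd)
  have hint_gf : Integrable (fun ω => |f ω| * g ω) μ := by
    apply hint_of_bd _ 1 (habs_meas.mul hg_meas)
    filter_upwards [hf_bd] with ω h
    simp only [Pi.mul_apply]; rw [abs_mul]
    exact mul_le_one₀ (by simpa using h) (abs_nonneg _) (hg_bd ω)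
  have hint_ηf : Integrable (fun ω => ηf (X ω)) μ :=
    hint_of_bd _ η (hηf_meas.comp hX)
      (.of_forall fun ω => abs_le.2 ⟨by linarith [(hηf_bounds (X ω)).1, hη0],
        (hηf_bounds (X ω)).2⟩)
  have hint_ηff : Integrable (fun ω => |f ω| * ηf (X ω)) μ := by
    apply hint_of_bd _ η (habs_meas.mul (hηf_meas.comp hX))
    filter_upwards [hf_bd] with ω h
    simp only [Pi.mul_apply, Function.comp_apply]; rw [abs_mul]
    calc |(|f ω|)| * |ηf (X ω)| ≤ 1 * η := by
          apply mul_le_mul (by simpa using h) _ (abs_nonneg _) zero_le_one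
          exact abs_le.2 ⟨by linarith [(hηf_bounds (X ω)).1, hη0], (hηf_bounds (X ω)).2⟩
    _ = η := one_mul η
  have hint_sub : Integrable (fun ω => (ηf (X ω) - lam) * |f ω|) μ := by
    have : (fun ω => (ηf (X ω) - lam) * |f ω|)
        = fun ω => |f ω| * ηf (X ω) - lam * |f ω| := by
      funext ω; ring
    rw [this]
    exact hint_ηff.sub (hint_f.const_mul lam)
  -- strong measurability of |f| wrt comap X
  have hXm : Measurable[MeasurableSpace.comap X inferInstance] X :=
    Measurable.of_comap_le le_rfl
  have hf_sm : StronglyMeasurable[MeasurableSpace.comap X inferInstance] fun ω => |f ω| :=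
    (((measurable_const.inner measurable_id).abs).comp hXm).stronglyMeasurable
  -- pull-out property
  have hpull : μ[(fun ω => |f ω|) * g|MeasurableSpace.comap X inferInstance]
      =ᵐ[μ] (fun ω => |f ω|) * μ[g|MeasurableSpace.comap X inferInstance] :=
    condExp_mul_of_stronglyMeasurable_left hf_sm hint_gf hint_g
  have key1 : ∫ ω, |f ω| * g ω ∂μ = ∫ ω, |f ω| * ηf (X ω) ∂μ := by
    have h1 : ∫ ω, |f ω| * g ω ∂μ
        = ∫ ω, (μ[(fun ω => |f ω|) * g|MeasurableSpace.comap X inferInstance]) ω ∂μ :=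
      (integral_condExp hm).symm
    rw [h1, integral_congr_ae (hpull.trans ?_)]
    filter_upwards [hMassart] with ω hω
    simp only [Pi.mul_apply]
    rw [hω]
  have key2 : (μ {ω | Real.sign (f ω) ≠ Y ω}).toReal = ∫ ω, ηf (X ω) ∂μ := by
    have hSmeas : MeasurableSet {ω | Real.sign (f ω) ≠ Y ω} :=
      (measurableSet_eq_fun (hsign.comp hf_meas) hY).compl
    have h0 : (μ {ω | Real.sign (f ω) ≠ Y ω}).toReal = ∫ ω, g ω ∂μ := by
      change μ.real _ = _
      rw [← integral_indicator_one hSmeas]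
      apply integral_congr_ae
      filter_upwards with ω
      by_cases h : Real.sign (f ω) = Y ω
      · simp [hg_def, h, Set.indicator_apply, Set.mem_setOf_eq]
      · simp [hg_def, h, Set.indicator_apply, Set.mem_setOf_eq]
    rw [h0, ← integral_condExp hm (μ := μ) (f := g), integral_congr_ae hMassart]
  -- pointwise identity
  have hpt : ∀ᵐ ω ∂μ, leakyRelu lam (-(Y ω) * f ω) = |f ω| * g ω - lam * |f ω| := by
    filter_upwards [hYpm, hmargin] with ω hY hγf
    have hγf' : γ ≤ |f ω| := hγf
    have hne : f ω ≠ 0 := by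
      intro h; rw [h] at hγf'; simp at hγf'; linarith
    rcases hne.lt_or_gt with hz | hz
    · have hs : Real.sign (f ω) = -1 := Real.sign_of_neg hz
      rcases hY with h1 | h1
      · have : g ω = 1 := by simp only [hg_def]; rw [hs, h1]; norm_num
        rw [this, h1, abs_of_neg hz, leakyRelu, if_pos (by linarith)]; ring
      · have : g ω = 0 := by simp only [hg_def]; rw [hs, h1]; norm_num
        rw [this, h1, abs_of_neg hz, leakyRelu, if_neg (by simp; linarith)]; ring
    · have hs : Real.sign (f ω) = 1 := Real.sign_of_pos hz
      rcases hY with h1 | h1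
      · have : g ω = 0 := by simp only [hg_def]; rw [hs, h1]; norm_num
        rw [this, h1, abs_of_pos hz, leakyRelu, if_neg (by simp; linarith)]; ring
      · have : g ω = 1 := by simp only [hg_def]; rw [hs, h1]; norm_num
        rw [this, h1, abs_of_pos hz, leakyRelu, if_pos (by linarith)]; ring
  calc ∫ ω, leakyRelu lam (-(Y ω) * f ω) ∂μ
      = ∫ ω, (|f ω| * g ω - lam * |f ω|) ∂μ := integral_congr_ae hpt
    _ = ∫ ω, |f ω| * g ω ∂μ - ∫ ω, lam * |f ω| ∂μ :=
        integral_sub hint_gf (hint_f.const_mul lam)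
    _ = ∫ ω, (ηf (X ω) - lam) * |f ω| ∂μ := by
        rw [key1, ← integral_sub hint_ηff (hint_f.const_mul lam)]
        congr 1; funext ω; ring
    _ ≤ ∫ ω, (ηf (X ω) - lam) * γ ∂μ := by
        apply integral_mono_ae hint_sub ((hint_ηf.sub (integrable_const lam)).mul_const γ)
        filter_upwards [hmargin] with ω hγf
        exact mul_le_mul_of_nonpos_left hγf (by linarith [(hηf_bounds (X ω)).2])
    _ = (∫ ω, ηf (X ω) ∂μ - lam) * γ := by
        rw [integral_mul_const, integral_sub hint_ηf (integrable_const lam),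
          integral_const]
        simp
    _ ≤ -γ * (lam - (μ {ω | Real.sign (f ω) ≠ Y ω}).toReal) := by
        rw [key2]; ring_nf; exact le_refl _
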